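/- Let B ⊆ ℕ^n be the set of bases of a discrete polymatroid that satisfies the one-sided (left-sided or right-sided) strong symmetric exchange property. Then B is sortable: for all u, v ∈ B, the sorted pair sort(u,v) = (u′, v′) again lies in B × B, where, setting s_0 = 0 and s_i = (u_1+v_1)+⋯+(u_i+v_i) for i = 1,…,n, one has u′_i = ⌈s_i/2⌉ − ⌈s_{i−1}/2⌉ and v′_i = ⌊s_i/2⌋ − ⌊s_{i−1}/2⌋ for i = 1,…,n. -/

import Mathlib

open Finset

/-- `u - e i + e j` (exchange move on integer vectors). -/
def exch {n : ℕ} (u : Fin n → ℕ) (i j : Fin n) : Fin n → ℕ :=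
  fun l => if l = i then u l - 1 else if l = j then u l + 1 else u l

/-- Symmetric exchange property for a set of vectors. -/
def SymExch {n : ℕ} (B : Set (Fin n → ℕ)) : Prop :=
  ∀ u ∈ B, ∀ v ∈ B, ∀ i : Fin n, v i < u i →
    ∃ j : Fin n, u j < v j ∧ exch u i j ∈ B ∧ exch v j i ∈ B

/-- Left-sided strong symmetric exchange property. -/
def LeftSSEP {n : ℕ} (B : Set (Fin n → ℕ)) : Prop :=
  ∀ u ∈ B, ∀ v ∈ B, ∀ i : Fin n, v i < u i →
    (∑ j ∈ Finset.Iio i, u j) < (∑ j ∈ Finset.Iio i, v j) →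
    ∃ j : Fin n, j < i ∧ u j < v j ∧ exch u i j ∈ B ∧ exch v j i ∈ B

/-- Right-sided strong symmetric exchange property. -/
def RightSSEP {n : ℕ} (B : Set (Fin n → ℕ)) : Prop :=
  ∀ u ∈ B, ∀ v ∈ B, ∀ i : Fin n, v i < u i →
    (∑ j ∈ Finset.Ioi i, u j) < (∑ j ∈ Finset.Ioi i, v j) →
    ∃ j : Fin n, i < j ∧ u j < v j ∧ exch u i j ∈ B ∧ exch v j i ∈ B

namespace SortableAux

variable {n : ℕ}

def pref (x : Fin n → ℕ) (k : ℕ) : ℕ :=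
  ∑ j ∈ Finset.univ.filter (fun j : Fin n => (j : ℕ) < k), x j

lemma pref_succ (x : Fin n → ℕ) {k : ℕ} (hk : k < n) :
    pref x (k + 1) = pref x k + x ⟨k, hk⟩ := by
  have h : Finset.univ.filter (fun j : Fin n => (j : ℕ) < k + 1)
      = insert (⟨k, hk⟩ : Fin n) (Finset.univ.filter (fun j : Fin n => (j : ℕ) < k)) := by
    ext j
    simp [Fin.ext_iff]
    omega
  rw [pref, h, Finset.sum_insert (by simp), pref]
  omega

lemma pref_top (x : Fin n → ℕ) {k : ℕ} (hk : n ≤ k) : pref x k = ∑ j, x j := by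
  rw [pref]
  have h : Finset.univ.filter (fun j : Fin n => (j : ℕ) < k) = Finset.univ := by
    ext j
    have := j.isLt
    simp
    omega
  rw [h]

lemma pref_mono (x : Fin n → ℕ) {k m : ℕ} (h : k ≤ m) : pref x k ≤ pref x m := by
  apply Finset.sum_le_sum_of_subset
  intro j hj
  simp at hj ⊢
  omega

lemma sum_Iio (x : Fin n → ℕ) (p : Fin n) :
    ∑ j ∈ Finset.Iio p, x j = pref x (p : ℕ) := by
  rw [pref]
  apply Finset.sum_congr _ (fun _ _ => rfl)
  ext j
  simp only [Finset.mem_Iio, Finset.mem_filter, Finset.mem_univ, true_and, Fin.lt_def]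

lemma pref_add {u v a b : Fin n → ℕ} (hab : ∀ l, a l + b l = u l + v l) (k : ℕ) :
    pref a k + pref b k = pref u k + pref v k := by
  rw [pref, pref, pref, pref, ← Finset.sum_add_distrib, ← Finset.sum_add_distrib]
  exact Finset.sum_congr rfl (fun j _ => hab j)

lemma exch_cast (x : Fin n → ℕ) (p q : Fin n) (hpq : p ≠ q) (hx : 1 ≤ x p) (l : Fin n) :
    (exch x p q l : ℤ) = (x l : ℤ) + (if l = q then 1 else 0) - (if l = p then 1 else 0) := by
  rw [exch]
  by_cases h1 : l = p
  · subst h1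
    rw [if_pos rfl, if_pos rfl, if_neg hpq]
    push_cast [hx]
    ring
  · rw [if_neg h1, if_neg h1]
    by_cases h2 : l = q
    · subst h2; rw [if_pos rfl, if_pos rfl]; push_cast; ring
    · rw [if_neg h2, if_neg h2]; push_cast; ring

lemma exch_add (x y : Fin n → ℕ) (i j : Fin n) (hij : i ≠ j) (hx : 1 ≤ x i) (hy : 1 ≤ y j)
    (l : Fin n) : exch x i j l + exch y j i l = x l + y l := by
  rw [exch, exch]
  by_cases h1 : l = i
  · subst h1
    rw [if_pos rfl, if_neg hij, if_pos rfl]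
    omega
  · rw [if_neg h1]
    by_cases h2 : l = j
    · subst h2
      rw [if_pos rfl, if_pos rfl]
      omega
    · rw [if_neg h2, if_neg h2, if_neg h1]

lemma pref_exch (x : Fin n → ℕ) (p q : Fin n) (hpq : p ≠ q) (hx : 1 ≤ x p) (k : ℕ) :
    (pref (exch x p q) k : ℤ)
      = (pref x k : ℤ) + (if (q : ℕ) < k then 1 else 0) - (if (p : ℕ) < k then 1 else 0) := by
  rw [pref, pref]
  push_cast
  rw [Finset.sum_congr rfl (fun l _ => exch_cast x p q hpq hx l)]
  rw [Finset.sum_sub_distrib, Finset.sum_add_distrib]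
  have h1 : (∑ l ∈ Finset.univ.filter (fun j : Fin n => (j : ℕ) < k),
      (if l = q then (1 : ℤ) else 0)) = if (q : ℕ) < k then 1 else 0 := by
    rw [Finset.sum_ite_eq' (Finset.univ.filter (fun j : Fin n => (j : ℕ) < k)) q (fun _ => (1:ℤ))]
    simp
  have h2 : (∑ l ∈ Finset.univ.filter (fun j : Fin n => (j : ℕ) < k),
      (if l = p then (1 : ℤ) else 0)) = if (p : ℕ) < k then 1 else 0 := by
    rw [Finset.sum_ite_eq' (Finset.univ.filter (fun j : Fin n => (j : ℕ) < k)) p (fun _ => (1:ℤ))]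
    simp
  rw [h1, h2]



def phi (u v a b : Fin n → ℕ) : ℕ :=
  ∑ k ∈ Finset.range (n + 1),
    2 ^ k * ((pref a k : ℤ) - (pref b k : ℤ) - (((pref u k + pref v k) % 2 : ℕ) : ℤ)).natAbs

lemma geom2 (m : ℕ) : ∑ k ∈ Finset.range m, 2 ^ k = 2 ^ m - 1 := by
  induction m with
  | zero => simp
  | succ m ih =>
    rw [Finset.sum_range_succ, ih, pow_succ]
    have := Nat.one_le_two_pow (n := m)
    omega

lemma sum_pow_lt (t t' : ℕ → ℕ) (K p q : ℕ) (hq : q < p) (hK : K ≤ p) (hp : p ≤ n)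
    (h1 : ∀ k, k ≤ n → ¬(q < k ∧ k ≤ p) → t' k = t k)
    (h2 : ∀ k, k ≤ n → q < k → k ≤ p → k < K → t' k = 2 ∧ t k = 0)
    (h3 : ∀ k, k ≤ n → q < k → k ≤ p → K ≤ k → t' k + 2 = t k) :
    ∑ k ∈ Finset.range (n + 1), 2 ^ k * t' k < ∑ k ∈ Finset.range (n + 1), 2 ^ k * t k := by
  have hkey : ∀ k ∈ Finset.range (n + 1),
      2 ^ k * t' k + (if q < k ∧ k ≤ p ∧ K ≤ k then 2 * 2 ^ k else 0)
        = 2 ^ k * t k + (if q < k ∧ k ≤ p ∧ k < K then 2 * 2 ^ k else 0) := by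
    intro k hk
    rw [Finset.mem_range] at hk
    have hkn : k ≤ n := by omega
    by_cases hin : q < k ∧ k ≤ p
    · by_cases hK2 : K ≤ k
      · have h3' := h3 k hkn hin.1 hin.2 hK2
        rw [if_pos ⟨hin.1, hin.2, hK2⟩, if_neg (by omega : ¬(q < k ∧ k ≤ p ∧ k < K)), ← h3']
        ring
      · have h2' := h2 k hkn hin.1 hin.2 (by omega)
        rw [if_neg (by omega : ¬(q < k ∧ k ≤ p ∧ K ≤ k)),
          if_pos ⟨hin.1, hin.2, (by omega : k < K)⟩, h2'.1, h2'.2]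
        ring
    · rw [if_neg (by tauto), if_neg (by tauto), h1 k hkn hin]
  have hsum : (∑ k ∈ Finset.range (n + 1), 2 ^ k * t' k)
        + (∑ k ∈ Finset.range (n + 1), (if q < k ∧ k ≤ p ∧ K ≤ k then 2 * 2 ^ k else 0))
      = (∑ k ∈ Finset.range (n + 1), 2 ^ k * t k)
        + (∑ k ∈ Finset.range (n + 1), (if q < k ∧ k ≤ p ∧ k < K then 2 * 2 ^ k else 0)) := by
    rw [← Finset.sum_add_distrib, ← Finset.sum_add_distrib]
    exact Finset.sum_congr rfl hkey
  have hE : 2 * 2 ^ p ≤ ∑ k ∈ Finset.range (n + 1),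
      (if q < k ∧ k ≤ p ∧ K ≤ k then 2 * 2 ^ k else 0) := by
    have hmem : p ∈ Finset.range (n + 1) := by rw [Finset.mem_range]; omega
    have h := Finset.single_le_sum
      (f := fun k => if q < k ∧ k ≤ p ∧ K ≤ k then 2 * 2 ^ k else 0)
      (fun i _ => Nat.zero_le _) hmem
    beta_reduce at h
    rwa [if_pos ⟨hq, le_rfl, hK⟩] at h
  have hG : (∑ k ∈ Finset.range (n + 1), (if q < k ∧ k ≤ p ∧ k < K then 2 * 2 ^ k else 0))
      ≤ 2 * (2 ^ K - 1) := by
    calc (∑ k ∈ Finset.range (n + 1), (if q < k ∧ k ≤ p ∧ k < K then 2 * 2 ^ k else 0))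
        ≤ ∑ k ∈ Finset.range (n + 1), (if k < K then 2 * 2 ^ k else 0) := by
          apply Finset.sum_le_sum
          intro k _
          by_cases hc : q < k ∧ k ≤ p ∧ k < K
          · rw [if_pos hc, if_pos hc.2.2]
          · rw [if_neg hc]
            exact Nat.zero_le _
      _ = ∑ k ∈ (Finset.range (n + 1)).filter (fun k => k < K), 2 * 2 ^ k := by
          rw [Finset.sum_filter]
      _ = ∑ k ∈ Finset.range K, 2 * 2 ^ k := by
          congr 1
          ext k
          simp only [Finset.mem_filter, Finset.mem_range]
          omega
      _ = 2 * (2 ^ K - 1) := by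
          rw [← Finset.mul_sum, geom2]
  have hKp : (2 : ℕ) ^ K ≤ 2 ^ p := Nat.pow_le_pow_right (by omega) hK
  have hK1 : 1 ≤ (2 : ℕ) ^ K := Nat.one_le_two_pow
  omega


lemma step (B : Set (Fin n → ℕ)) (hmod : ∀ u ∈ B, ∀ v ∈ B, ∑ i, u i = ∑ i, v i)
    (hL : LeftSSEP B) {u v a b : Fin n → ℕ} (hu : u ∈ B) (hv : v ∈ B)
    (ha : a ∈ B) (hb : b ∈ B) (hab : ∀ l, a l + b l = u l + v l)
    (hphi : phi u v a b ≠ 0) :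
    ∃ a' ∈ B, ∃ b' ∈ B, (∀ l, a' l + b' l = u l + v l) ∧ phi u v a' b' < phi u v a b := by
  classical
  have hex : ∃ k, k ≤ n ∧
      (pref a k : ℤ) - (pref b k : ℤ) ≠ (((pref u k + pref v k) % 2 : ℕ) : ℤ) := by
    by_contra hcon
    push_neg at hcon
    apply hphi
    rw [phi]
    apply Finset.sum_eq_zero
    intro k hk
    rw [Finset.mem_range] at hk
    have h2 : ((pref a k : ℤ) - (pref b k : ℤ) - (((pref u k + pref v k) % 2 : ℕ) : ℤ)) = 0 := by
      rw [hcon k (by omega)]; ring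
    rw [h2]
    simp
  set K := Nat.find hex with hKdef
  obtain ⟨hKn', hKne⟩ := Nat.find_spec hex
  rw [← hKdef] at hKn' hKne
  have hKmin : ∀ m, m < K → m ≤ n →
      (pref a m : ℤ) - (pref b m : ℤ) = (((pref u m + pref v m) % 2 : ℕ) : ℤ) := by
    intro m hm hmn
    have h := Nat.find_min hex hm
    push_neg at h
    exact h hmn
  -- facts at the right end
  have hswap : ∑ i, u i = ∑ i, v i := hmod u hu v hv
  have habn : pref a n = pref b n := by
    rw [pref_top a le_rfl, pref_top b le_rfl]
    exact hmod a ha b hb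
  have huvn : pref u n = pref v n := by
    rw [pref_top u le_rfl, pref_top v le_rfl]; exact hswap
  have hKn : K < n := by
    rcases Nat.lt_or_ge K n with h | h
    · exact h
    · exfalso
      have : K = n := by omega
      rw [this] at hKne
      apply hKne
      rw [habn]
      omega
  have hdK := pref_add hab K
  by_cases hcase : ((((pref u K + pref v K) % 2 : ℕ) : ℤ)) < (pref a K : ℤ) - (pref b K : ℤ)
  · -- Case A : a is too heavy on the prefix
    have hMex : ∃ m, K < m ∧ m ≤ n ∧
        (pref a m : ℤ) - (pref b m : ℤ) < (pref a K : ℤ) - (pref b K : ℤ) := by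
      refine ⟨n, hKn, le_rfl, ?_⟩
      omega
    set M := Nat.find hMex with hMdef
    obtain ⟨hM1, hM2, hM3⟩ := Nat.find_spec hMex
    rw [← hMdef] at hM1 hM2 hM3
    have hMmin : ∀ m, m < M → K < m → m ≤ n →
        (pref a K : ℤ) - (pref b K : ℤ) ≤ (pref a m : ℤ) - (pref b m : ℤ) := by
      intro m hm h1 h2
      have h := Nat.find_min hMex hm
      push_neg at h
      exact h h1 h2
    have hp : M - 1 < n := by omega
    have hcp_ge : ∀ k, K ≤ k → k ≤ M - 1 →
        (pref a K : ℤ) - (pref b K : ℤ) ≤ (pref a k : ℤ) - (pref b k : ℤ) := by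
      intro k h1 h2
      rcases eq_or_lt_of_le h1 with rfl | h
      · exact le_rfl
      · exact hMmin k (by omega) h (by omega)
    have hMe : M - 1 + 1 = M := by omega
    have ea := pref_succ a hp
    have eb := pref_succ b hp
    rw [hMe] at ea eb
    set P : Fin n := ⟨M - 1, hp⟩ with hPdef
    have hap : a P < b P := by
      have h := hcp_ge (M - 1) (by omega) le_rfl
      omega
    have hpre : (∑ j ∈ Finset.Iio P, b j) < ∑ j ∈ Finset.Iio P, a j := by
      rw [sum_Iio, sum_Iio]
      have h := hcp_ge (M - 1) (by omega) le_rfl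
      have hdm := pref_add hab (M - 1)
      simp only [hPdef]
      omega
    obtain ⟨q, hqP, hq2, hbB, haB⟩ := hL b hb a ha P hap hpre
    have hqPne : q ≠ P := ne_of_lt hqP
    have hq1 : 1 ≤ a q := by omega
    have hbp1 : 1 ≤ b P := by omega
    refine ⟨exch a q P, haB, exch b P q, hbB, ?_, ?_⟩
    · intro l
      rw [exch_add a b q P hqPne hq1 (by omega) l]
      exact hab l
    · rw [phi, phi]
      have hqval : (q : ℕ) < M - 1 := hqP
      apply sum_pow_lt _ _ K (M - 1) (q : ℕ) hqval (by omega) (by omega)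
      · intro k hk hnotin
        have hA := pref_exch a q P hqPne hq1 k
        have hB := pref_exch b P q (Ne.symm hqPne) hbp1 k
        have hPv : (P : ℕ) = M - 1 := rfl
        rw [hPv] at hA hB
        by_cases hk1 : (q : ℕ) < k
        · have hk2 : M - 1 < k := by omega
          rw [if_pos hk1, if_pos hk2] at hA hB
          omega
        · have hk2 : ¬ (M - 1 < k) := by omega
          rw [if_neg hk1, if_neg hk2] at hA hB
          omega
      · intro k hk hq' hp' hK'
        have hA := pref_exch a q P hqPne hq1 k
        have hB := pref_exch b P q (Ne.symm hqPne) hbp1 k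
        have hPv : (P : ℕ) = M - 1 := rfl
        rw [hPv, if_pos hq', if_neg (by omega : ¬ (M - 1 < k))] at hA hB
        have hm := hKmin k hK' (by omega)
        omega
      · intro k hk hq' hp' hK'
        have hA := pref_exch a q P hqPne hq1 k
        have hB := pref_exch b P q (Ne.symm hqPne) hbp1 k
        have hPv : (P : ℕ) = M - 1 := rfl
        rw [hPv, if_pos hq', if_neg (by omega : ¬ (M - 1 < k))] at hA hB
        have hge := hcp_ge k hK' hp'
        have hdk := pref_add hab k
        omega
  · -- Case B : b is too heavy on the prefix
    have hcase' : (pref a K : ℤ) - (pref b K : ℤ) < (((pref u K + pref v K) % 2 : ℕ) : ℤ) := by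
      omega
    have hMex : ∃ m, K < m ∧ m ≤ n ∧
        (pref a K : ℤ) - (pref b K : ℤ) < (pref a m : ℤ) - (pref b m : ℤ) := by
      refine ⟨n, hKn, le_rfl, ?_⟩
      omega
    set M := Nat.find hMex with hMdef
    obtain ⟨hM1, hM2, hM3⟩ := Nat.find_spec hMex
    rw [← hMdef] at hM1 hM2 hM3
    have hMmin : ∀ m, m < M → K < m → m ≤ n →
        (pref a m : ℤ) - (pref b m : ℤ) ≤ (pref a K : ℤ) - (pref b K : ℤ) := by
      intro m hm h1 h2
      have h := Nat.find_min hMex hm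
      push_neg at h
      exact h h1 h2
    have hp : M - 1 < n := by omega
    have hcp_le : ∀ k, K ≤ k → k ≤ M - 1 →
        (pref a k : ℤ) - (pref b k : ℤ) ≤ (pref a K : ℤ) - (pref b K : ℤ) := by
      intro k h1 h2
      rcases eq_or_lt_of_le h1 with rfl | h
      · exact le_rfl
      · exact hMmin k (by omega) h (by omega)
    have hMe : M - 1 + 1 = M := by omega
    have ea := pref_succ a hp
    have eb := pref_succ b hp
    rw [hMe] at ea eb
    set P : Fin n := ⟨M - 1, hp⟩ with hPdef
    have hap : b P < a P := by
      have h := hcp_le (M - 1) (by omega) le_rfl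
      omega
    have hpre : (∑ j ∈ Finset.Iio P, a j) < ∑ j ∈ Finset.Iio P, b j := by
      rw [sum_Iio, sum_Iio]
      have h := hcp_le (M - 1) (by omega) le_rfl
      have hdm := pref_add hab (M - 1)
      simp only [hPdef]
      omega
    obtain ⟨q, hqP, hq2, haB, hbB⟩ := hL a ha b hb P hap hpre
    have hqPne : P ≠ q := (ne_of_lt hqP).symm
    have hap1 : 1 ≤ a P := by omega
    have hbq1 : 1 ≤ b q := by omega
    refine ⟨exch a P q, haB, exch b q P, hbB, ?_, ?_⟩
    · intro l
      rw [exch_add a b P q hqPne hap1 hbq1 l]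
      exact hab l
    · rw [phi, phi]
      have hqval : (q : ℕ) < M - 1 := hqP
      apply sum_pow_lt _ _ K (M - 1) (q : ℕ) hqval (by omega) (by omega)
      · intro k hk hnotin
        have hA := pref_exch a P q hqPne hap1 k
        have hB := pref_exch b q P (Ne.symm hqPne) hbq1 k
        have hPv : (P : ℕ) = M - 1 := rfl
        rw [hPv] at hA hB
        by_cases hk1 : (q : ℕ) < k
        · have hk2 : M - 1 < k := by omega
          rw [if_pos hk1, if_pos hk2] at hA hB
          omega
        · have hk2 : ¬ (M - 1 < k) := by omega
          rw [if_neg hk1, if_neg hk2] at hA hB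
          omega
      · intro k hk hq' hp' hK'
        have hA := pref_exch a P q hqPne hap1 k
        have hB := pref_exch b q P (Ne.symm hqPne) hbq1 k
        have hPv : (P : ℕ) = M - 1 := rfl
        rw [hPv, if_pos hq', if_neg (by omega : ¬ (M - 1 < k))] at hA hB
        have hm := hKmin k hK' (by omega)
        omega
      · intro k hk hq' hp' hK'
        have hA := pref_exch a P q hqPne hap1 k
        have hB := pref_exch b q P (Ne.symm hqPne) hbq1 k
        have hPv : (P : ℕ) = M - 1 := rfl
        rw [hPv, if_pos hq', if_neg (by omega : ¬ (M - 1 < k))] at hA hB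
        have hle := hcp_le k hK' hp'
        have hdk := pref_add hab k
        omega

lemma exists_zero (B : Set (Fin n → ℕ)) (hmod : ∀ u ∈ B, ∀ v ∈ B, ∑ i, u i = ∑ i, v i)
    (hL : LeftSSEP B) {u v : Fin n → ℕ} (hu : u ∈ B) (hv : v ∈ B) :
    ∃ a ∈ B, ∃ b ∈ B, (∀ l, a l + b l = u l + v l) ∧ phi u v a b = 0 := by
  have main : ∀ N : ℕ, ∀ a b : Fin n → ℕ, a ∈ B → b ∈ B →
      (∀ l, a l + b l = u l + v l) → phi u v a b ≤ N →
      ∃ a' ∈ B, ∃ b' ∈ B, (∀ l, a' l + b' l = u l + v l) ∧ phi u v a' b' = 0 := by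
    intro N
    induction N with
    | zero => exact fun a b ha hb hab h => ⟨a, ha, b, hb, hab, Nat.le_zero.mp h⟩
    | succ N ih =>
      intro a b ha hb hab h
      by_cases h0 : phi u v a b = 0
      · exact ⟨a, ha, b, hb, hab, h0⟩
      · obtain ⟨a', ha', b', hb', hab', hlt⟩ := step B hmod hL hu hv ha hb hab h0
        exact ih a' b' ha' hb' hab' (by omega)
  exact main (phi u v u v) u v hu hv (fun l => rfl) le_rfl

lemma main_left (B : Set (Fin n → ℕ)) (hmod : ∀ u ∈ B, ∀ v ∈ B, ∑ i, u i = ∑ i, v i)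
    (hL : LeftSSEP B) :
    ∀ u ∈ B, ∀ v ∈ B,
      (fun i : Fin n =>
          ((∑ j ∈ Finset.univ.filter (fun j : Fin n => (j : ℕ) < (i : ℕ) + 1), (u j + v j)) + 1) / 2
            - ((∑ j ∈ Finset.univ.filter (fun j : Fin n => (j : ℕ) < (i : ℕ)), (u j + v j)) + 1) / 2) ∈ B ∧
      (fun i : Fin n =>
          (∑ j ∈ Finset.univ.filter (fun j : Fin n => (j : ℕ) < (i : ℕ) + 1), (u j + v j)) / 2
            - (∑ j ∈ Finset.univ.filter (fun j : Fin n => (j : ℕ) < (i : ℕ)), (u j + v j)) / 2) ∈ B := by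
  intro u hu v hv
  obtain ⟨a, ha, b, hb, hab, h0⟩ := exists_zero B hmod hL hu hv
  have hz : ∀ k, k ≤ n →
      (pref a k : ℤ) - (pref b k : ℤ) = (((pref u k + pref v k) % 2 : ℕ) : ℤ) := by
    intro k hk
    rw [phi] at h0
    have h1 := (Finset.sum_eq_zero_iff.mp h0) k (by rw [Finset.mem_range]; omega)
    have h2 : (2 : ℕ) ^ k ≠ 0 := by positivity
    have h3 : ((pref a k : ℤ) - (pref b k : ℤ)
        - (((pref u k + pref v k) % 2 : ℕ) : ℤ)).natAbs = 0 := by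
      rcases Nat.mul_eq_zero.mp h1 with h | h
      · exact absurd h h2
      · exact h
    omega
  have esum : ∀ (x y : Fin n → ℕ) (k : ℕ),
      (∑ j ∈ Finset.univ.filter (fun j : Fin n => (j : ℕ) < k), (x j + y j))
        = pref x k + pref y k := by
    intro x y k
    rw [pref, pref, ← Finset.sum_add_distrib]
  constructor
  · have heq : (fun i : Fin n =>
        ((∑ j ∈ Finset.univ.filter (fun j : Fin n => (j : ℕ) < (i : ℕ) + 1), (u j + v j)) + 1) / 2
          - ((∑ j ∈ Finset.univ.filter (fun j : Fin n => (j : ℕ) < (i : ℕ)), (u j + v j)) + 1) / 2)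
        = a := by
      funext i
      have h1 := hz (i : ℕ) (by have := i.isLt; omega)
      have h2 := hz ((i : ℕ) + 1) (by have := i.isLt; omega)
      have h3 := pref_add hab (i : ℕ)
      have h4 := pref_add hab ((i : ℕ) + 1)
      have h5 := pref_succ a i.isLt
      simp only [Fin.eta] at h5
      rw [esum, esum]
      omega
    rw [heq]; exact ha
  · have heq : (fun i : Fin n =>
        (∑ j ∈ Finset.univ.filter (fun j : Fin n => (j : ℕ) < (i : ℕ) + 1), (u j + v j)) / 2
          - (∑ j ∈ Finset.univ.filter (fun j : Fin n => (j : ℕ) < (i : ℕ)), (u j + v j)) / 2)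
        = b := by
      funext i
      have h1 := hz (i : ℕ) (by have := i.isLt; omega)
      have h2 := hz ((i : ℕ) + 1) (by have := i.isLt; omega)
      have h3 := pref_add hab (i : ℕ)
      have h4 := pref_add hab ((i : ℕ) + 1)
      have h5 := pref_succ b i.isLt
      simp only [Fin.eta] at h5
      rw [esum, esum]
      omega
    rw [heq]; exact hb

lemma exch_comp_rev (x : Fin n → ℕ) (i j : Fin n) :
    (exch x i j) ∘ Fin.rev = exch (x ∘ Fin.rev) (Fin.rev i) (Fin.rev j) := by
  funext l
  simp only [Function.comp_apply, exch]
  have h1 : (Fin.rev l = i) ↔ (l = Fin.rev i) := by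
    constructor
    · intro h; rw [← h, Fin.rev_rev]
    · intro h; rw [h, Fin.rev_rev]
  have h2 : (Fin.rev l = j) ↔ (l = Fin.rev j) := by
    constructor
    · intro h; rw [← h, Fin.rev_rev]
    · intro h; rw [h, Fin.rev_rev]
  simp only [h1, h2]

lemma image_rev_Iio (i : Fin n) :
    (Finset.Iio i).image Fin.rev = Finset.Ioi (Fin.rev i) := by
  ext j
  simp only [Finset.mem_image, Finset.mem_Iio, Finset.mem_Ioi]
  constructor
  · rintro ⟨m, hm, rfl⟩
    exact Fin.rev_lt_rev.mpr hm
  · intro h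
    refine ⟨Fin.rev j, ?_, Fin.rev_rev j⟩
    have := Fin.rev_lt_rev.mpr h
    rwa [Fin.rev_rev] at this

lemma sum_Ioi_rev (z : Fin n → ℕ) (i : Fin n) :
    (∑ j ∈ Finset.Ioi (Fin.rev i), (z ∘ Fin.rev) j) = ∑ j ∈ Finset.Iio i, z j := by
  rw [← image_rev_Iio, Finset.sum_image (by intro a _ b _ h; exact Fin.rev_injective h)]
  apply Finset.sum_congr rfl
  intro m _
  simp [Fin.rev_rev]

lemma left_of_right (B : Set (Fin n → ℕ)) (hR : RightSSEP B) :
    LeftSSEP {x : Fin n → ℕ | x ∘ Fin.rev ∈ B} := by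
  intro x hx y hy i hlt hsum
  have hx' : x ∘ Fin.rev ∈ B := hx
  have hy' : y ∘ Fin.rev ∈ B := hy
  have hc1 : (y ∘ Fin.rev) (Fin.rev i) < (x ∘ Fin.rev) (Fin.rev i) := by
    simpa [Fin.rev_rev] using hlt
  have hc2 : (∑ j ∈ Finset.Ioi (Fin.rev i), (x ∘ Fin.rev) j)
      < ∑ j ∈ Finset.Ioi (Fin.rev i), (y ∘ Fin.rev) j := by
    rw [sum_Ioi_rev, sum_Ioi_rev]
    exact hsum
  obtain ⟨j', hij', hxy', hxe, hye⟩ := hR (x ∘ Fin.rev) hx' (y ∘ Fin.rev) hy' (Fin.rev i) hc1 hc2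
  refine ⟨Fin.rev j', ?_, ?_, ?_, ?_⟩
  · have := Fin.rev_lt_rev.mpr hij'
    rwa [Fin.rev_rev] at this
  · simpa using hxy'
  · show (exch x i (Fin.rev j')) ∘ Fin.rev ∈ B
    rw [exch_comp_rev, Fin.rev_rev]
    exact hxe
  · show (exch y (Fin.rev j') i) ∘ Fin.rev ∈ B
    rw [exch_comp_rev, Fin.rev_rev]
    exact hye

lemma rev_pref (x : Fin n → ℕ) (k : ℕ) (hk : k ≤ n) :
    pref (x ∘ Fin.rev) k + pref x (n - k) = ∑ j, x j := by
  have him : (Finset.univ.filter (fun j : Fin n => (j : ℕ) < k)).image Fin.rev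
      = Finset.univ.filter (fun j : Fin n => ¬ ((j : ℕ) < n - k)) := by
    ext j
    simp only [Finset.mem_image, Finset.mem_filter, Finset.mem_univ, true_and]
    constructor
    · rintro ⟨m, hm, rfl⟩
      have h1 := m.isLt
      rw [Fin.val_rev]
      omega
    · intro h
      refine ⟨Fin.rev j, ?_, Fin.rev_rev j⟩
      have h1 := j.isLt
      rw [Fin.val_rev]
      omega
  have h1 : pref (x ∘ Fin.rev) k
      = ∑ j ∈ Finset.univ.filter (fun j : Fin n => ¬ ((j : ℕ) < n - k)), x j := by
    rw [pref, ← him, Finset.sum_image (by intro a _ b _ h; exact Fin.rev_injective h)]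
    apply Finset.sum_congr rfl
    intro m _
    simp [Fin.rev_rev]
  rw [h1, pref, add_comm]
  exact Finset.sum_filter_add_sum_filter_not Finset.univ _ x

lemma main_right (B : Set (Fin n → ℕ)) (hmod : ∀ u ∈ B, ∀ v ∈ B, ∑ i, u i = ∑ i, v i)
    (hR : RightSSEP B) :
    ∀ u ∈ B, ∀ v ∈ B,
      (fun i : Fin n =>
          ((∑ j ∈ Finset.univ.filter (fun j : Fin n => (j : ℕ) < (i : ℕ) + 1), (u j + v j)) + 1) / 2
            - ((∑ j ∈ Finset.univ.filter (fun j : Fin n => (j : ℕ) < (i : ℕ)), (u j + v j)) + 1) / 2) ∈ B ∧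
      (fun i : Fin n =>
          (∑ j ∈ Finset.univ.filter (fun j : Fin n => (j : ℕ) < (i : ℕ) + 1), (u j + v j)) / 2
            - (∑ j ∈ Finset.univ.filter (fun j : Fin n => (j : ℕ) < (i : ℕ)), (u j + v j)) / 2) ∈ B := by
  intro u hu v hv
  have hL' : LeftSSEP {x : Fin n → ℕ | x ∘ Fin.rev ∈ B} := left_of_right B hR
  have hrevrev : ∀ x : Fin n → ℕ, (x ∘ Fin.rev) ∘ Fin.rev = x := by
    intro x; funext l; simp [Fin.rev_rev]
  have hmod' : ∀ x ∈ {x : Fin n → ℕ | x ∘ Fin.rev ∈ B}, ∀ y ∈ {x : Fin n → ℕ | x ∘ Fin.rev ∈ B},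
      ∑ i, x i = ∑ i, y i := by
    intro x hx y hy
    have h1 : ∑ i, (x ∘ Fin.rev) i = ∑ i, x i := Equiv.sum_comp Fin.revPerm x
    have h2 : ∑ i, (y ∘ Fin.rev) i = ∑ i, y i := Equiv.sum_comp Fin.revPerm y
    rw [← h1, ← h2]
    exact hmod _ hx _ hy
  have hu' : u ∘ Fin.rev ∈ {x : Fin n → ℕ | x ∘ Fin.rev ∈ B} := by
    show (u ∘ Fin.rev) ∘ Fin.rev ∈ B
    rw [hrevrev]; exact hu
  have hv' : v ∘ Fin.rev ∈ {x : Fin n → ℕ | x ∘ Fin.rev ∈ B} := by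
    show (v ∘ Fin.rev) ∘ Fin.rev ∈ B
    rw [hrevrev]; exact hv
  obtain ⟨hF, hG⟩ := main_left _ hmod' hL' (u ∘ Fin.rev) hu' (v ∘ Fin.rev) hv'
  -- notation
  have esum : ∀ (x y : Fin n → ℕ) (k : ℕ),
      (∑ j ∈ Finset.univ.filter (fun j : Fin n => (j : ℕ) < k), (x j + y j))
        = pref x k + pref y k := by
    intro x y k
    rw [pref, pref, ← Finset.sum_add_distrib]
  have huvsum : ∑ j, u j = ∑ j, v j := hmod u hu v hv
  constructor
  · -- ceil target for (u,v) equals (floor target of reversed) ∘ rev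
    have hmem : (fun i : Fin n =>
        (∑ j ∈ Finset.univ.filter (fun j : Fin n => (j : ℕ) < (i : ℕ) + 1),
            ((u ∘ Fin.rev) j + (v ∘ Fin.rev) j)) / 2
          - (∑ j ∈ Finset.univ.filter (fun j : Fin n => (j : ℕ) < (i : ℕ)),
            ((u ∘ Fin.rev) j + (v ∘ Fin.rev) j)) / 2) ∘ Fin.rev ∈ B := hG
    have heq : (fun i : Fin n =>
        ((∑ j ∈ Finset.univ.filter (fun j : Fin n => (j : ℕ) < (i : ℕ) + 1), (u j + v j)) + 1) / 2
          - ((∑ j ∈ Finset.univ.filter (fun j : Fin n => (j : ℕ) < (i : ℕ)), (u j + v j)) + 1) / 2)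
        = (fun i : Fin n =>
        (∑ j ∈ Finset.univ.filter (fun j : Fin n => (j : ℕ) < (i : ℕ) + 1),
            ((u ∘ Fin.rev) j + (v ∘ Fin.rev) j)) / 2
          - (∑ j ∈ Finset.univ.filter (fun j : Fin n => (j : ℕ) < (i : ℕ)),
            ((u ∘ Fin.rev) j + (v ∘ Fin.rev) j)) / 2) ∘ Fin.rev := by
      funext i
      have hc := i.isLt
      simp only [Function.comp_apply, Fin.val_rev]
      rw [esum, esum, esum, esum]
      have e2 : n - ((i : ℕ) + 1) + 1 = n - (i : ℕ) := by omega
      rw [e2]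
      have h1u := rev_pref u (n - (i : ℕ)) (by omega)
      have h1v := rev_pref v (n - (i : ℕ)) (by omega)
      have h0u := rev_pref u (n - ((i : ℕ) + 1)) (by omega)
      have h0v := rev_pref v (n - ((i : ℕ) + 1)) (by omega)
      have e3 : n - (n - (i : ℕ)) = (i : ℕ) := by omega
      have e4 : n - (n - ((i : ℕ) + 1)) = (i : ℕ) + 1 := by omega
      rw [e3] at h1u h1v
      rw [e4] at h0u h0v
      simp only [Function.comp_def] at h1u h1v h0u h0v
      have m1 : pref u (i : ℕ) ≤ pref u ((i : ℕ) + 1) := pref_mono u (by omega)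
      have m2 : pref v (i : ℕ) ≤ pref v ((i : ℕ) + 1) := pref_mono v (by omega)
      have m3 : pref u ((i : ℕ) + 1) ≤ pref u n := pref_mono u (by omega)
      have m4 : pref v ((i : ℕ) + 1) ≤ pref v n := pref_mono v (by omega)
      have t1 : pref u n = ∑ j, u j := pref_top u le_rfl
      have t2 : pref v n = ∑ j, v j := pref_top v le_rfl
      omega
    rw [heq]
    exact hmem
  · have hmem : (fun i : Fin n =>
        ((∑ j ∈ Finset.univ.filter (fun j : Fin n => (j : ℕ) < (i : ℕ) + 1),
            ((u ∘ Fin.rev) j + (v ∘ Fin.rev) j)) + 1) / 2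
          - ((∑ j ∈ Finset.univ.filter (fun j : Fin n => (j : ℕ) < (i : ℕ)),
            ((u ∘ Fin.rev) j + (v ∘ Fin.rev) j)) + 1) / 2) ∘ Fin.rev ∈ B := hF
    have heq : (fun i : Fin n =>
        (∑ j ∈ Finset.univ.filter (fun j : Fin n => (j : ℕ) < (i : ℕ) + 1), (u j + v j)) / 2
          - (∑ j ∈ Finset.univ.filter (fun j : Fin n => (j : ℕ) < (i : ℕ)), (u j + v j)) / 2)
        = (fun i : Fin n =>
        ((∑ j ∈ Finset.univ.filter (fun j : Fin n => (j : ℕ) < (i : ℕ) + 1),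
            ((u ∘ Fin.rev) j + (v ∘ Fin.rev) j)) + 1) / 2
          - ((∑ j ∈ Finset.univ.filter (fun j : Fin n => (j : ℕ) < (i : ℕ)),
            ((u ∘ Fin.rev) j + (v ∘ Fin.rev) j)) + 1) / 2) ∘ Fin.rev := by
      funext i
      have hc := i.isLt
      simp only [Function.comp_apply, Fin.val_rev]
      rw [esum, esum, esum, esum]
      have e2 : n - ((i : ℕ) + 1) + 1 = n - (i : ℕ) := by omega
      rw [e2]
      have h1u := rev_pref u (n - (i : ℕ)) (by omega)
      have h1v := rev_pref v (n - (i : ℕ)) (by omega)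
      have h0u := rev_pref u (n - ((i : ℕ) + 1)) (by omega)
      have h0v := rev_pref v (n - ((i : ℕ) + 1)) (by omega)
      have e3 : n - (n - (i : ℕ)) = (i : ℕ) := by omega
      have e4 : n - (n - ((i : ℕ) + 1)) = (i : ℕ) + 1 := by omega
      rw [e3] at h1u h1v
      rw [e4] at h0u h0v
      simp only [Function.comp_def] at h1u h1v h0u h0v
      have m1 : pref u (i : ℕ) ≤ pref u ((i : ℕ) + 1) := pref_mono u (by omega)
      have m2 : pref v (i : ℕ) ≤ pref v ((i : ℕ) + 1) := pref_mono v (by omega)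
      have m3 : pref u ((i : ℕ) + 1) ≤ pref u n := pref_mono u (by omega)
      have m4 : pref v ((i : ℕ) + 1) ≤ pref v n := pref_mono v (by omega)
      have t1 : pref u n = ∑ j, u j := pref_top u le_rfl
      have t2 : pref v n = ∑ j, v j := pref_top v le_rfl
      omega
    rw [heq]
    exact hmem

end SortableAux

/-- a base set of a discrete polymatroid satisfying the one-sided
strong symmetric exchange property is sortable. -/
theorem sortable_of_oneSided_SSEP {n : ℕ} (B : Set (Fin n → ℕ))
    (hfin : B.Finite) (hne : B.Nonempty)
    (hmod : ∀ u ∈ B, ∀ v ∈ B, ∑ i, u i = ∑ i, v i)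
    (hex : SymExch B)
    (hone : LeftSSEP B ∨ RightSSEP B) :
    ∀ u ∈ B, ∀ v ∈ B,
      (fun i : Fin n =>
          ((∑ j ∈ Finset.univ.filter (fun j : Fin n => (j : ℕ) < (i : ℕ) + 1), (u j + v j)) + 1) / 2
            - ((∑ j ∈ Finset.univ.filter (fun j : Fin n => (j : ℕ) < (i : ℕ)), (u j + v j)) + 1) / 2) ∈ B ∧
      (fun i : Fin n =>
          (∑ j ∈ Finset.univ.filter (fun j : Fin n => (j : ℕ) < (i : ℕ) + 1), (u j + v j)) / 2
            - (∑ j ∈ Finset.univ.filter (fun j : Fin n => (j : ℕ) < (i : ℕ)), (u j + v j)) / 2) ∈ B := by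
  rcases hone with hL | hR
  · exact SortableAux.main_left B hmod hL
  · exact SortableAux.main_right B hmod hR
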